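/- arXiv:1403.1026 — 2 statements merged into one kernel-verified Lean document; each statement's English description precedes it below -/
import Mathlib

section
/- For every idempotent e ∈ E, the coset δ_e + J is a two-sided multiplicative identity of the quotient algebra A/J; that is, for every f ∈ A one has δ_e * f − f ∈ J and f * δ_e − f ∈ J. -/
open MonoidAlgebra

/-- An inverse semigroup: a semigroup in which every element `s` has a unique
generalized inverse `s*` with `s * s* * s = s` and `s* * s * s* = s*`. -/
class InverseSemigroup (S : Type*) extends Semigroup S where
  star : S → S
  star_left : ∀ s : S, s * star s * s = s
  star_right : ∀ s : S, star s * s * star s = star s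
  star_unique : ∀ s t : S, s * t * s = s → t * s * t = t → t = star s

variable (S : Type*) [InverseSemigroup S]

/-- The ℂ-linear span in the semigroup algebra `A = MonoidAlgebra ℂ S` of the set
`{δ_{s e t} - δ_{s t} : s, t ∈ S, e ∈ E}`, where `E = {e : e * e = e}` is the set of
idempotents of `S`. -/
noncomputable def J : Submodule ℂ (MonoidAlgebra ℂ S) :=
  Submodule.span ℂ { x | ∃ s t e : S, e * e = e ∧
    x = single (s * e * t) (1 : ℂ) - single (s * t) (1 : ℂ) }

variable {S}

section Aux
open InverseSemigroup

lemma idem_of_self (e : S) (he : e * e = e) : ∀ x : S, e * (e * x) = e * x :=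
  fun x => by rw [← mul_assoc, he]

lemma star_idem {e : S} (he : e * e = e) : star e = e :=
  (star_unique e e (by rw [he, he]) (by rw [he, he])).symm

lemma mul_idem {e f : S} (he : e * e = e) (hf : f * f = f) :
    (e * f) * (e * f) = e * f := by
  have hed := idem_of_self e he
  have hfd := idem_of_self f hf
  set a := star (e * f) with ha
  have h1 : (e * f) * a * (e * f) = e * f := star_left _
  have h2 : a * (e * f) * a = a := star_right _
  have hA : f * a * e = a := by
    apply star_unique
    · have : (e * f) * (f * a * e) * (e * f) = (e * f) * a * (e * f) := by
        simp only [mul_assoc, hed, hfd]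
      rw [this, h1]
    · have : (f * a * e) * (e * f) * (f * a * e) = f * (a * (e * f) * a) * e := by
        simp only [mul_assoc, hed, hfd]
      rw [this, h2]
  have haa : a * a = a := by
    conv_lhs => rw [← hA]
    have : (f * a * e) * (f * a * e) = f * (a * (e * f) * a) * e := by
      simp only [mul_assoc]
    rw [this, h2, hA]
  have hef : e * f = a := by
    rw [← star_idem haa]
    exact star_unique a (e * f) h2 h1
  rw [hef, haa]

lemma idem_comm {e f : S} (he : e * e = e) (hf : f * f = f) : e * f = f * e := by
  have hed := idem_of_self e he
  have hfd := idem_of_self f hf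
  have h1 := mul_idem he hf
  have h2 := mul_idem hf he
  have h3 : f * e = star (e * f) := by
    apply star_unique
    · have : (e * f) * (f * e) * (e * f) = (e * f) * (e * f) := by
        simp only [mul_assoc, hed, hfd]
      rw [this, h1]
    · have : (f * e) * (e * f) * (f * e) = (f * e) * (f * e) := by
        simp only [mul_assoc, hed, hfd]
      rw [this, h2]
  rw [h3, star_idem h1]

lemma mul_star_idem (s : S) : (s * star s) * (s * star s) = s * star s := by
  have h : (s * star s) * (s * star s) = (s * star s * s) * star s := by
    simp only [mul_assoc]
  rw [h, star_left]

lemma star_mul_idem (s : S) : (star s * s) * (star s * s) = star s * s := by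
  have h : (star s * s) * (star s * s) = star s * (s * star s * s) := by
    simp only [mul_assoc]
  rw [h, star_left]

lemma gen_mem (x y g : S) (hg : g * g = g) :
    single (x * g * y) (1 : ℂ) - single (x * y) (1 : ℂ) ∈ J S :=
  Submodule.subset_span ⟨x, y, g, hg, rfl⟩

lemma left_single_mem (e : S) (he : e * e = e) (a : S) (c : ℂ) :
    single e (1 : ℂ) * single a c - single a c ∈ J S := by
  have hk1 : (a * star a) * e * a = e * a := by
    rw [idem_comm (mul_star_idem a) he]
    rw [mul_assoc e, star_left]
  have hk2 : (a * star a) * a = a := star_left a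
  have h := (J S).smul_mem c (gen_mem (a * star a) a e he)
  rw [smul_sub, hk1, hk2] at h
  simpa [single_mul_single, Finsupp.smul_single] using h

lemma right_single_mem (e : S) (he : e * e = e) (a : S) (c : ℂ) :
    single a c * single e (1 : ℂ) - single a c ∈ J S := by
  have hk1 : a * e * (star a * a) = a * e := by
    rw [mul_assoc, idem_comm he (star_mul_idem a), ← mul_assoc, ← mul_assoc, star_left]
  have hk2 : a * (star a * a) = a := by rw [← mul_assoc, star_left]
  have h := (J S).smul_mem c (gen_mem a (star a * a) e he)
  rw [smul_sub, hk1, hk2] at h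
  simpa [single_mul_single, Finsupp.smul_single] using h

lemma all_mem {p : Submodule ℂ (MonoidAlgebra ℂ S)} (h : ∀ (a : S) (c : ℂ), single a c ∈ p)
    (f : MonoidAlgebra ℂ S) : f ∈ p := by
  induction f using MonoidAlgebra.induction with
  | zero => exact p.zero_mem
  | single_add a c g _ _ ih => exact p.add_mem (h a c) ih

noncomputable def mulLeftSub (e : S) : Submodule ℂ (MonoidAlgebra ℂ S) where
  carrier := {f | single e (1 : ℂ) * f - f ∈ J S}
  add_mem' := by
    intro x y hx hy
    simp only [Set.mem_setOf_eq] at *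
    have h := (J S).add_mem hx hy
    have heq : (single e (1 : ℂ) * x - x) + (single e (1 : ℂ) * y - y)
        = single e (1 : ℂ) * (x + y) - (x + y) := by rw [mul_add]; abel
    rwa [heq] at h
  zero_mem' := by simp only [Set.mem_setOf_eq, mul_zero, sub_zero]; exact (J S).zero_mem
  smul_mem' := by
    intro c x hx
    simp only [Set.mem_setOf_eq] at *
    have heq : single e (1 : ℂ) * (c • x) - c • x
        = c • (single e (1 : ℂ) * x - x) := by rw [mul_smul_comm, smul_sub]
    rw [heq]
    exact (J S).smul_mem c hx

noncomputable def mulRightSub (e : S) : Submodule ℂ (MonoidAlgebra ℂ S) where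
  carrier := {f | f * single e (1 : ℂ) - f ∈ J S}
  add_mem' := by
    intro x y hx hy
    simp only [Set.mem_setOf_eq] at *
    have h := (J S).add_mem hx hy
    have heq : (x * single e (1 : ℂ) - x) + (y * single e (1 : ℂ) - y)
        = (x + y) * single e (1 : ℂ) - (x + y) := by rw [add_mul]; abel
    rwa [heq] at h
  zero_mem' := by simp only [Set.mem_setOf_eq, zero_mul, sub_zero]; exact (J S).zero_mem
  smul_mem' := by
    intro c x hx
    simp only [Set.mem_setOf_eq] at *
    have heq : (c • x) * single e (1 : ℂ) - c • x
        = c • (x * single e (1 : ℂ) - x) := by rw [smul_mul_assoc, smul_sub]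
    rw [heq]
    exact (J S).smul_mem c hx

end Aux

/-- for every idempotent `e ∈ E`, the coset `δ_e + J` is a two-sided
multiplicative identity of `A ⧸ J`: for every `f ∈ A` one has `δ_e * f - f ∈ J`
and `f * δ_e - f ∈ J`. -/
theorem single_idem_coset_is_identity (e : S) (he : e * e = e) (f : MonoidAlgebra ℂ S) :
    single e (1 : ℂ) * f - f ∈ J S ∧ f * single e (1 : ℂ) - f ∈ J S := by
  constructor
  · exact all_mem (p := mulLeftSub e) (fun a c => left_single_mem e he a c) f
  · exact all_mem (p := mulRightSub e) (fun a c => right_single_mem e he a c) f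
end

section
/- Let D : A → A/J be a ℂ-linear map satisfying the Leibniz rule D(f * g) = π(f)·D(g) + D(f)·π(g) for all f, g ∈ A, and define φ : S → A/J by φ(s) = D(δ_s)·π(δ_{s*}). Then for all s, t ∈ S the cocycle identity φ(s t) = π(δ_s)·φ(t)·π(δ_{s*}) + φ(s) holds. -/
open MonoidAlgebra

variable (S : Type*) [InverseSemigroup S]

variable {S}

theorem mul_mem_J (f : MonoidAlgebra ℂ S) {x : MonoidAlgebra ℂ S} (hx : x ∈ J S) :
    f * x ∈ J S := by
  induction hx using Submodule.span_induction with
  | mem x hx =>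
    obtain ⟨s, t, e, he, rfl⟩ := hx
    induction f using MonoidAlgebra.induction_linear with
    | zero => simp
    | add a b ha hb => rw [add_mul]; exact (J S).add_mem ha hb
    | single a b =>
      have : (single a b : MonoidAlgebra ℂ S) *
            (single (s * e * t) (1 : ℂ) - single (s * t) (1 : ℂ))
          = b • (single ((a * s) * e * t) (1 : ℂ) - single ((a * s) * t) (1 : ℂ)) := by
        rw [mul_sub, single_mul_single, single_mul_single, smul_sub, smul_single', smul_single']
        simp [mul_assoc]
      rw [this]
      exact (J S).smul_mem _ (Submodule.subset_span ⟨a * s, t, e, he, rfl⟩)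
  | zero => simp
  | add x y hx hy ihx ihy => rw [mul_add]; exact (J S).add_mem ihx ihy
  | smul c x hx ih => rw [mul_smul_comm]; exact (J S).smul_mem _ ih

theorem J_mul_mem (f : MonoidAlgebra ℂ S) {x : MonoidAlgebra ℂ S} (hx : x ∈ J S) :
    x * f ∈ J S := by
  induction hx using Submodule.span_induction with
  | mem x hx =>
    obtain ⟨s, t, e, he, rfl⟩ := hx
    induction f using MonoidAlgebra.induction_linear with
    | zero => simp
    | add a b ha hb => rw [mul_add]; exact (J S).add_mem ha hb
    | single a b =>
      have : (single (s * e * t) (1 : ℂ) - single (s * t) (1 : ℂ)) *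
            (single a b : MonoidAlgebra ℂ S)
          = b • (single (s * e * (t * a)) (1 : ℂ) - single (s * (t * a)) (1 : ℂ)) := by
        rw [sub_mul, single_mul_single, single_mul_single, smul_sub, smul_single', smul_single']
        simp [mul_assoc]
      rw [this]
      exact (J S).smul_mem _ (Submodule.subset_span ⟨s, t * a, e, he, rfl⟩)
  | zero => simp
  | add x y hx hy ihx ihy => rw [add_mul]; exact (J S).add_mem ihx ihy
  | smul c x hx ih => rw [smul_mul_assoc]; exact (J S).smul_mem _ ih

/-- Multiplication of cosets in the quotient algebra `A ⧸ J`, well defined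
since `J` is a two-sided ideal: `(f + J) * (g + J) = f * g + J`. -/
noncomputable instance : Mul (MonoidAlgebra ℂ S ⧸ J S) :=
  ⟨Quotient.map₂' (· * ·) (by
    intro a₁ a₂ h₁ b₁ b₂ h₂
    have h₁' : a₁ - a₂ ∈ J S := (Submodule.quotientRel_def (J S)).mp h₁
    have h₂' : b₁ - b₂ ∈ J S := (Submodule.quotientRel_def (J S)).mp h₂
    refine (Submodule.quotientRel_def (J S)).mpr ?_
    have : a₁ * b₁ - a₂ * b₂ = a₁ * (b₁ - b₂) + (a₁ - a₂) * b₂ := by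
      rw [mul_sub, sub_mul]; abel
    rw [this]
    exact (J S).add_mem (mul_mem_J _ h₂') (J_mul_mem _ h₁'))⟩

variable (S)

/-- The quotient map `π : A → A ⧸ J`, sending `f` to the coset `f + J`. -/
noncomputable def π : MonoidAlgebra ℂ S → MonoidAlgebra ℂ S ⧸ J S := Submodule.Quotient.mk

theorem π_mul (f g : MonoidAlgebra ℂ S) : π S (f * g) = π S f * π S g := rfl

namespace ISG
open InverseSemigroup
variable {S : Type*} [InverseSemigroup S]

lemma star_star (s : S) : star (star s) = s :=
  (star_unique (star s) s (star_right s) (star_left s)).symm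

lemma star_of_idem {e : S} (he : e * e = e) : star e = e :=
  (star_unique e e (by rw [he, he]) (by rw [he, he])).symm

lemma ext_right {a b : S} (h : a = b) (x : S) : a * x = b * x := by rw [h]

lemma idem_mul_idem {e f : S} (he : e * e = e) (hf : f * f = f) :
    (e * f) * (e * f) = e * f := by
  set g := star (e * f) with hg
  have he1 : ∀ x : S, e * (e * x) = e * x := fun x => by rw [← mul_assoc, he]
  have hf1 : ∀ x : S, f * (f * x) = f * x := fun x => by rw [← mul_assoc, hf]
  have h1g : ∀ x : S, e * (f * (g * (e * (f * x)))) = e * (f * x) := fun x => by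
    simpa [mul_assoc] using ext_right (star_left (e * f)) x
  have h2g : ∀ x : S, g * (e * (f * (g * x))) = g * x := fun x => by
    simpa [mul_assoc] using ext_right (star_right (e * f)) x
  have h1' : e * (f * (g * (e * f))) = e * f := by
    simpa [mul_assoc] using star_left (e * f)
  have c1 : (e * f) * (f * g * e) * (e * f) = e * f := by
    simp only [mul_assoc]
    rw [hf1, he1]
    exact h1'
  have c2 : (f * g * e) * (e * f) * (f * g * e) = f * g * e := by
    simp only [mul_assoc]
    rw [he1, hf1, h2g]
  have heq : f * g * e = star (e * f) := star_unique (e * f) (f * g * e) c1 c2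
  have hxx : (f * g * e) * (f * g * e) = f * g * e := by
    simp only [mul_assoc]
    rw [h2g]
  have hgid : star (e * f) * star (e * f) = star (e * f) := by rw [← heq]; exact hxx
  have := star_of_idem hgid
  rw [star_star] at this
  rw [this]; exact hgid

lemma idem_comm {e f : S} (he : e * e = e) (hf : f * f = f) : e * f = f * e := by
  have hef := idem_mul_idem he hf
  have hfe := idem_mul_idem hf he
  have he1 : ∀ x : S, e * (e * x) = e * x := fun x => by rw [← mul_assoc, he]
  have hf1 : ∀ x : S, f * (f * x) = f * x := fun x => by rw [← mul_assoc, hf]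
  have c1 : (e * f) * (f * e) * (e * f) = e * f := by
    simp only [mul_assoc]
    rw [hf1, he1, ← mul_assoc, ← mul_assoc, mul_assoc (e*f) e f, hef]
  have c2 : (f * e) * (e * f) * (f * e) = f * e := by
    simp only [mul_assoc]
    rw [he1, hf1, ← mul_assoc, ← mul_assoc, mul_assoc (f*e) f e, hfe]
  have := star_unique (e * f) (f * e) c1 c2
  rw [star_of_idem hef] at this
  exact this.symm

lemma mul_star_idem (t : S) : (t * star t) * (t * star t) = t * star t := by
  rw [show (t * star t) * (t * star t) = (t * star t * t) * star t by
        simp [mul_assoc], star_left]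

lemma star_mul_idem (t : S) : (star t * t) * (star t * t) = star t * t := by
  rw [show (star t * t) * (star t * t) = (star t * t * star t) * t by
        simp [mul_assoc], star_right]

lemma star_mul' (s t : S) : star (s * t) = star t * star s := by
  have comm : (t * star t) * (star s * s) = (star s * s) * (t * star t) :=
    idem_comm (mul_star_idem t) (star_mul_idem s)
  have commg : ∀ x : S, t * (star t * (star s * (s * x)))
      = star s * (s * (t * (star t * x))) := fun x => by
    simpa [mul_assoc] using ext_right comm x
  have commg' : ∀ x : S, star s * (s * (t * (star t * x)))
      = t * (star t * (star s * (s * x))) := fun x => (commg x).symm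
  have hslt : t * (star t * t) = t := by simpa [mul_assoc] using star_left t
  have hsl : ∀ x : S, s * (star s * (s * x)) = s * x := fun x => by
    simpa [mul_assoc] using ext_right (star_left s) x
  have hsr : star s * (s * star s) = star s := by simpa [mul_assoc] using star_right s
  have hsrt : ∀ x : S, star t * (t * (star t * x)) = star t * x := fun x => by
    simpa [mul_assoc] using ext_right (star_right t) x
  have c1 : (s * t) * (star t * star s) * (s * t) = s * t := by
    simp only [mul_assoc]
    rw [commg, hslt, hsl]
  have c2 : (star t * star s) * (s * t) * (star t * star s) = star t * star s := by
    simp only [mul_assoc]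
    rw [commg', hsr, hsrt]
  exact (star_unique (s * t) (star t * star s) c1 c2).symm

end ISG

section QuotHelpers
variable {S : Type*} [InverseSemigroup S]

lemma quot_mul_assoc (x y z : MonoidAlgebra ℂ S ⧸ J S) : x * y * z = x * (y * z) := by
  obtain ⟨a, rfl⟩ := Submodule.Quotient.mk_surjective _ x
  obtain ⟨b, rfl⟩ := Submodule.Quotient.mk_surjective _ y
  obtain ⟨c, rfl⟩ := Submodule.Quotient.mk_surjective _ z
  show π S (a * b * c) = π S (a * (b * c))
  rw [mul_assoc]

lemma quot_add_mul (x y z : MonoidAlgebra ℂ S ⧸ J S) : (x + y) * z = x * z + y * z := by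
  obtain ⟨a, rfl⟩ := Submodule.Quotient.mk_surjective _ x
  obtain ⟨b, rfl⟩ := Submodule.Quotient.mk_surjective _ y
  obtain ⟨c, rfl⟩ := Submodule.Quotient.mk_surjective _ z
  show (π S a + π S b) * π S c = π S (a * c) + π S (b * c)
  rw [show π S a + π S b = π S (a + b) from (Submodule.Quotient.mk_add _).symm]
  show π S ((a + b) * c) = π S (a * c) + π S (b * c)
  rw [add_mul]
  exact Submodule.Quotient.mk_add _

end QuotHelpers

variable {S}

/-- if `D : A → A ⧸ J` is a ℂ-linear map satisfying the Leibniz rule and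
`φ(s) = D(δ_s) · π(δ_{s*})`, then the cocycle identity
`φ(s t) = π(δ_s) · φ(t) · π(δ_{s*}) + φ(s)` holds for all `s, t ∈ S`. -/
theorem cocycle_identity
    (D : MonoidAlgebra ℂ S →ₗ[ℂ] MonoidAlgebra ℂ S ⧸ J S)
    (hD : ∀ f g : MonoidAlgebra ℂ S, D (f * g) = π S f * D g + D f * π S g)
    (φ : S → MonoidAlgebra ℂ S ⧸ J S)
    (hφ : ∀ s : S, φ s = D (single s (1 : ℂ)) * π S (single (InverseSemigroup.star s) (1 : ℂ))) :
    ∀ s t : S,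
      φ (s * t) = π S (single s (1 : ℂ)) * φ t * π S (single (InverseSemigroup.star s) (1 : ℂ))
        + φ s := by
  intro s t
  open InverseSemigroup in
  have hst : (single (s * t) (1 : ℂ) : MonoidAlgebra ℂ S) = single s 1 * single t 1 := by
    rw [single_mul_single, one_mul]
  rw [hφ (s * t), hφ t, hφ s, hst, hD, ISG.star_mul', quot_add_mul]
  congr 1
  · -- first summand
    have h2 : (single (star t * star s) (1 : ℂ) : MonoidAlgebra ℂ S)
        = single (star t) 1 * single (star s) 1 := by
      rw [single_mul_single, one_mul]
    rw [h2, π_mul, ← quot_mul_assoc, ← quot_mul_assoc]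
  · -- second summand
    have hJ : π S (single (t * (star t * star s)) (1 : ℂ))
        = π S (single (star s) (1 : ℂ)) := by
      refine (Submodule.Quotient.eq _).mpr ?_
      refine Submodule.subset_span ⟨star s * s, star s, t * star t, ISG.mul_star_idem t, ?_⟩
      have e1 : t * (star t * star s) = (star s * s) * (t * star t) * star s := by
        rw [ISG.idem_comm (ISG.star_mul_idem s) (ISG.mul_star_idem t)]
        simp only [mul_assoc]
        rw [show star s * (s * star s) = star s from by
          simpa [mul_assoc] using star_right s]
      have e2 : (star s : S) = star s * s * star s := (star_right s).symm
      rw [← e1, ← e2]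
    have h3 : (single t (1 : ℂ) : MonoidAlgebra ℂ S) * single (star t * star s) 1
        = single (t * (star t * star s)) 1 := by
      rw [single_mul_single, one_mul]
    rw [quot_mul_assoc, ← π_mul, h3, hJ]
end
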